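/- Assume γ, K, z, B, W > 0 with 0 < W ≤ B and γ·(K/2)·z² ≤ 1, and let P > 0. Define R₁(q) = 4·[K·z + (√q + δ)²]·[ (2·(W/B)/√((κ/8)·q))·(√π/2)·erf(√((κ/8)·q)) + 5·exp(−√(γ·K·z²) − (κ/9)·q) ] for q > 0, and c₁ = 20·[K·z + δ² + √(18/(κ·e))·δ + 9/(κ·e)]·exp(−√(γ·K·z²)). Then: (i) R₁(q) ≤ c₁ + 8·(W/B)·f(κ/8, q + P_o) for all q > 0; (ii) the map P ↦ c₁ + 8·(W/B)·f(κ/8, P + P_o) is nondecreasing and concave on (0, ∞); and (iii) for every random variable Π with Π > 0 almost surely and E[Π] ≤ P, E[R₁(Π)] ≤ c₁ + 8·(W/B)·f(κ/8, P + P_o). -/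

import Mathlib

open MeasureTheory

/-- The error function `erf(y) = (2/√π)·∫₀^y e^{−u²} du`. -/
noncomputable def erf (y : ℝ) : ℝ := (2 / Real.sqrt Real.pi) * ∫ u in (0:ℝ)..y, Real.exp (-u ^ 2)

/-- `δ = √(3Kz/(4e))`. -/
noncomputable def dlt (K z : ℝ) : ℝ := Real.sqrt (3 * K * z / (4 * Real.exp 1))

/-- `f(s,P) = [K·z + (√P + δ)²]·(√π/2)·erf(√(s·P))/√(s·P)`. -/
noncomputable def ffun (K z s P : ℝ) : ℝ :=
  (K * z + (Real.sqrt P + dlt K z) ^ 2) * (Real.sqrt Real.pi / 2) *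
    erf (Real.sqrt (s * P)) / Real.sqrt (s * P)

open intervalIntegral


noncomputable def II (x : ℝ) : ℝ := ∫ t in (0:ℝ)..x, Real.exp (-t^2)
noncomputable def JJ (x : ℝ) : ℝ := ∫ t in (0:ℝ)..x, 2*t^2*Real.exp (-t^2)
noncomputable def KK (x : ℝ) : ℝ := ∫ t in (0:ℝ)..x, 4*t^4*Real.exp (-t^2)

lemma hasDerivAt_primitive {f : ℝ → ℝ} (hf : Continuous f) (x : ℝ) :
    HasDerivAt (fun u => ∫ t in (0:ℝ)..u, f t) (f x) x :=
  integral_hasDerivAt_right (hf.intervalIntegrable _ _)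
    (hf.stronglyMeasurableAtFilter _ _) hf.continuousAt

lemma cont_exp_neg_sq : Continuous (fun t : ℝ => Real.exp (-t^2)) := by continuity
lemma cont_t2 : Continuous (fun t : ℝ => 2*t^2*Real.exp (-t^2)) := by continuity
lemma cont_t4 : Continuous (fun t : ℝ => 4*t^4*Real.exp (-t^2)) := by continuity

lemma II_deriv (x : ℝ) : HasDerivAt II (Real.exp (-x^2)) x := hasDerivAt_primitive cont_exp_neg_sq x
lemma JJ_deriv (x : ℝ) : HasDerivAt JJ (2*x^2*Real.exp (-x^2)) x := hasDerivAt_primitive cont_t2 x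
lemma KK_deriv (x : ℝ) : HasDerivAt KK (4*x^4*Real.exp (-x^2)) x := hasDerivAt_primitive cont_t4 x

lemma II_zero : II 0 = 0 := integral_same
lemma JJ_zero : JJ 0 = 0 := integral_same
lemma KK_zero : KK 0 = 0 := integral_same

lemma JJ_eq (x : ℝ) : JJ x = II x - x * Real.exp (-x^2) := by
  have key : ∀ y : ℝ, (fun x => JJ x - (II x - x * Real.exp (-x^2))) y
      = (fun x => JJ x - (II x - x * Real.exp (-x^2))) 0 := by
    intro y
    apply is_const_of_deriv_eq_zero (f := fun x => JJ x - (II x - x * Real.exp (-x^2)))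
    · intro u
      exact ((JJ_deriv u).sub ((II_deriv u).sub
        ((hasDerivAt_id u).mul (((hasDerivAt_id u).pow 2).neg.exp)))).differentiableAt
    · intro u
      have hexp : HasDerivAt (fun x : ℝ => Real.exp (-x^2)) (Real.exp (-u^2) * -(2*u^1)) u := by
        simpa using (((hasDerivAt_id u).pow 2).neg).exp
      have h : HasDerivAt (fun x => JJ x - (II x - x * Real.exp (-x^2)))
          (2*u^2*Real.exp (-u^2) - (Real.exp (-u^2) -
            (1 * Real.exp (-u^2) + u * (Real.exp (-u^2) * -(2 * u^1))))) u :=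
        (JJ_deriv u).sub ((II_deriv u).sub (((hasDerivAt_id u)).mul hexp))
      rw [h.deriv]; ring
  have := key x
  simp [JJ_zero, II_zero] at this
  linarith [this]

lemma KK_eq (x : ℝ) : KK x = 3 * JJ x - 2 * x^3 * Real.exp (-x^2) := by
  have key : ∀ y : ℝ, (fun x => KK x - (3 * JJ x - 2 * x^3 * Real.exp (-x^2))) y
      = (fun x => KK x - (3 * JJ x - 2 * x^3 * Real.exp (-x^2))) 0 := by
    intro y
    apply is_const_of_deriv_eq_zero (f := fun x => KK x - (3 * JJ x - 2 * x^3 * Real.exp (-x^2)))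
    · intro u
      have hexp : HasDerivAt (fun x : ℝ => Real.exp (-x^2)) (Real.exp (-u^2) * -(2*u^1)) u := by
        simpa using (((hasDerivAt_id u).pow 2).neg).exp
      exact ((KK_deriv u).sub (((JJ_deriv u).const_mul 3).sub
        ((((hasDerivAt_id u).pow 3).const_mul 2).mul hexp))).differentiableAt
    · intro u
      have hexp : HasDerivAt (fun x : ℝ => Real.exp (-x^2)) (Real.exp (-u^2) * -(2*u^1)) u := by
        simpa using (((hasDerivAt_id u).pow 2).neg).exp
      have hcube : HasDerivAt (fun x : ℝ => 2 * x^3) (2 * (3 * u^2 * 1)) u := by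
        simpa using ((hasDerivAt_id u).pow 3).const_mul 2
      have h : HasDerivAt (fun x => KK x - (3 * JJ x - 2 * x^3 * Real.exp (-x^2))) _ u :=
        (KK_deriv u).sub (((JJ_deriv u).const_mul 3).sub (hcube.mul hexp))
      rw [h.deriv]; ring
  have := key x
  simp [KK_zero, JJ_zero] at this
  linarith [this]

lemma II_nonneg {x : ℝ} (hx : 0 ≤ x) : 0 ≤ II x :=
  integral_nonneg hx (fun t _ => (Real.exp_pos _).le)
lemma JJ_nonneg {x : ℝ} (hx : 0 ≤ x) : 0 ≤ JJ x :=
  integral_nonneg hx (fun t _ => by positivity)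
lemma II_pos {x : ℝ} (hx : 0 < x) : 0 < II x :=
  intervalIntegral.intervalIntegral_pos_of_pos (f := fun t : ℝ => Real.exp (-t^2))
    (cont_exp_neg_sq.intervalIntegrable _ _) (fun t => Real.exp_pos _) hx

lemma JJ_le {x : ℝ} (hx : 0 ≤ x) : JJ x ≤ 2 * x^2 * II x := by
  have h : JJ x ≤ ∫ t in (0:ℝ)..x, 2*x^2*Real.exp (-t^2) := by
    apply integral_mono_on hx (cont_t2.intervalIntegrable _ _)
      ((continuous_const.mul cont_exp_neg_sq).intervalIntegrable _ _)
    intro t ht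
    have ht0 : 0 ≤ t := ht.1
    have ht1 : t ≤ x := ht.2
    have : t^2 ≤ x^2 := by nlinarith
    simp only [Pi.mul_apply]
    nlinarith [Real.exp_pos (-t^2)]
  rwa [intervalIntegral.integral_const_mul] at h

lemma KK_le {x : ℝ} (hx : 0 ≤ x) : KK x ≤ 2 * x^2 * JJ x := by
  have h : KK x ≤ ∫ t in (0:ℝ)..x, 2*x^2*(2*t^2*Real.exp (-t^2)) := by
    apply integral_mono_on hx (cont_t4.intervalIntegrable _ _)
      ((continuous_const.mul cont_t2).intervalIntegrable _ _)
    intro t ht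
    have ht0 : 0 ≤ t := ht.1
    have ht1 : t ≤ x := ht.2
    have h2 : t^2 ≤ x^2 := by nlinarith
    simp only [Pi.mul_apply]
    nlinarith [mul_le_mul_of_nonneg_left h2 (by positivity : (0:ℝ) ≤ 4*t^2*Real.exp (-t^2))]
  rwa [intervalIntegral.integral_const_mul] at h

noncomputable def gfun (C D s x : ℝ) : ℝ := C * (II x / x) + D * II x + (1/s) * (x * II x)
noncomputable def psi (C s x : ℝ) : ℝ := (1/s) * (II x / x) - C * (JJ x / x^3)
noncomputable def phi (C D s x : ℝ) : ℝ :=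
  psi C s x + (D * (Real.exp (-x^2) / x) + (1/s) * Real.exp (-x^2))
lemma gfun_deriv {C D s x : ℝ} (hx : x ≠ 0) :
    HasDerivAt (gfun C D s) (x * phi C D s x) x := by
  have h1 : HasDerivAt (fun x => II x / x)
      ((Real.exp (-x^2) * x - II x * 1) / x^2) x := (II_deriv x).div (hasDerivAt_id x) hx
  have h2 : HasDerivAt (fun x => x * II x) (1 * II x + x * Real.exp (-x^2)) x :=
    (hasDerivAt_id x).mul (II_deriv x)
  have h : HasDerivAt (gfun C D s) _ x :=
    ((h1.const_mul C).add ((II_deriv x).const_mul D)).add (h2.const_mul (1/s))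
  convert h using 1
  unfold phi psi
  rw [JJ_eq]
  apply mul_left_cancel₀ (pow_ne_zero 3 hx)
  field_simp
  linear_combination (0:ℝ) * mul_inv_cancel₀ hx

lemma psi_deriv {C s x : ℝ} (hx : x ≠ 0) :
    HasDerivAt (psi C s) (-(1/s) * (JJ x / x^2) + C * (KK x / x^4)) x := by
  have h1 : HasDerivAt (fun x => II x / x)
      ((Real.exp (-x^2) * x - II x * 1) / x^2) x := (II_deriv x).div (hasDerivAt_id x) hx
  have hx3 : (x^3 : ℝ) ≠ 0 := pow_ne_zero _ hx
  have hp : HasDerivAt (fun x : ℝ => x^3) (3 * x^2 * 1) x := by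
    simpa using hasDerivAt_pow 3 x
  have h2 : HasDerivAt (fun x => JJ x / x^3)
      ((2*x^2*Real.exp (-x^2) * x^3 - JJ x * (3 * x^2 * 1)) / (x^3)^2) x :=
    (JJ_deriv x).div hp hx3
  have h : HasDerivAt (psi C s) _ x := (h1.const_mul (1/s)).sub (h2.const_mul C)
  convert h using 1
  rw [KK_eq, JJ_eq]
  field_simp
  ring
section Signs
variable {C D s : ℝ} (hC : 0 ≤ C) (hD : 0 ≤ D) (hs : 0 < s) (hCs : 2*C*s ≤ 1)

include hs hCs in
lemma twoC_le : 2*C ≤ 1/s := (le_div_iff₀ hs).2 (by linarith)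

include hC hs hCs in
lemma psi_deriv_nonpos {x : ℝ} (hx : 0 < x) :
    -(1/s) * (JJ x / x^2) + C * (KK x / x^4) ≤ 0 := by
  have hJ : 0 ≤ JJ x := JJ_nonneg hx.le
  have hKle : KK x ≤ 2 * x^2 * JJ x := KK_le hx.le
  have h1 : C * (KK x / x^4) ≤ C * ((2*x^2*JJ x) / x^4) := by gcongr
  have h2 : (2*x^2*JJ x) / x^4 = 2 * (JJ x / x^2) := by
    field_simp
  have h3 : C * (2 * (JJ x / x^2)) ≤ (1/s) * (JJ x / x^2) := by
    have : (0:ℝ) ≤ JJ x / x^2 := by positivity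
    nlinarith [twoC_le hs hCs]
  rw [h2] at h1
  linarith

include hC hs hCs in
lemma antitoneOn_psi : AntitoneOn (psi C s) (Set.Ioi (0:ℝ)) := by
  apply antitoneOn_of_deriv_nonpos (convex_Ioi 0)
  · intro x hx
    exact (psi_deriv (ne_of_gt hx)).continuousAt.continuousWithinAt
  · intro x hx
    rw [interior_Ioi] at hx
    exact (psi_deriv (ne_of_gt hx)).differentiableAt.differentiableWithinAt
  · intro x hx
    rw [interior_Ioi] at hx
    rw [(psi_deriv (ne_of_gt hx)).deriv]
    exact psi_deriv_nonpos hC hs hCs hx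

include hC hD hs hCs in
lemma phi_nonneg {x : ℝ} (hx : 0 < x) : 0 ≤ phi C D s x := by
  have hI : 0 ≤ II x := II_nonneg hx.le
  have hJle : JJ x ≤ 2 * x^2 * II x := JJ_le hx.le
  have hpsi : 0 ≤ psi C s x := by
    unfold psi
    have h1 : C * (JJ x / x^3) ≤ C * ((2*x^2*II x) / x^3) := by gcongr
    have h2 : (2*x^2*II x) / x^3 = 2 * (II x / x) := by field_simp
    have h3 : C * (2 * (II x / x)) ≤ (1/s) * (II x / x) := by
      have : (0:ℝ) ≤ II x / x := by positivity
      nlinarith [twoC_le hs hCs]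
    rw [h2] at h1
    linarith
  unfold phi
  have : 0 ≤ D * (Real.exp (-x^2) / x) + (1/s) * Real.exp (-x^2) := by positivity
  linarith

include hC hD hs hCs in
lemma antitoneOn_phi : AntitoneOn (phi C D s) (Set.Ioi (0:ℝ)) := by
  intro a ha b hb hab
  rw [Set.mem_Ioi] at ha hb
  unfold phi
  have h1 : psi C s b ≤ psi C s a := antitoneOn_psi hC hs hCs ha hb hab
  have hsq : a^2 ≤ b^2 := by nlinarith
  have hexp : Real.exp (-b^2) ≤ Real.exp (-a^2) := Real.exp_le_exp.2 (by linarith)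
  have h2 : Real.exp (-b^2) / b ≤ Real.exp (-a^2) / a :=
    div_le_div₀ (Real.exp_pos _).le hexp ha hab
  have h3 : D * (Real.exp (-b^2) / b) ≤ D * (Real.exp (-a^2) / a) :=
    mul_le_mul_of_nonneg_left h2 hD
  have h4 : (1/s) * Real.exp (-b^2) ≤ (1/s) * Real.exp (-a^2) :=
    mul_le_mul_of_nonneg_left hexp (by positivity)
  linarith


include hs in
lemma G_hasDerivAt (c : ℝ) {P : ℝ} (hP : -c < P) :
    HasDerivAt (fun P => gfun C D s (Real.sqrt (s*(P+c))))
      ((s/2) * phi C D s (Real.sqrt (s*(P+c)))) P := by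
  have harg : 0 < s*(P+c) := mul_pos hs (by linarith)
  have hxpos : 0 < Real.sqrt (s*(P+c)) := Real.sqrt_pos.2 harg
  have inner : HasDerivAt (fun P : ℝ => s*(P+c)) (s*1) P :=
    ((hasDerivAt_id P).add_const c).const_mul s
  have hsq : HasDerivAt (fun P : ℝ => Real.sqrt (s*(P+c)))
      (1/(2*Real.sqrt (s*(P+c))) * (s*1)) P :=
    (Real.hasDerivAt_sqrt harg.ne').comp P inner
  have outer := gfun_deriv (C := C) (D := D) (s := s) hxpos.ne'
  have comp := outer.comp P hsq
  have : (fun P : ℝ => gfun C D s (Real.sqrt (s*(P+c))))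
      = (gfun C D s) ∘ (fun P : ℝ => Real.sqrt (s*(P+c))) := rfl
  rw [this]
  convert comp using 1
  · rfl
  · rfl
  linear_combination (-(s/2) * phi C D s (Real.sqrt (s*(P+c)))) * mul_inv_cancel₀ hxpos.ne'

include hC hD hs hCs in
lemma monotoneOn_G (c : ℝ) :
    MonotoneOn (fun P => gfun C D s (Real.sqrt (s*(P+c)))) (Set.Ioi (-c)) := by
  apply monotoneOn_of_deriv_nonneg (convex_Ioi _)
  · intro P hP
    exact (G_hasDerivAt hs c hP).continuousAt.continuousWithinAt
  · intro P hP
    rw [interior_Ioi] at hP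
    exact (G_hasDerivAt hs c hP).differentiableAt.differentiableWithinAt
  · intro P hP
    rw [interior_Ioi] at hP
    rw [(G_hasDerivAt hs c hP).deriv]
    have harg : 0 < s*(P+c) := mul_pos hs (by rw [Set.mem_Ioi] at hP; linarith)
    have := phi_nonneg hC hD hs hCs (Real.sqrt_pos.2 harg)
    positivity

include hC hD hs hCs in
lemma derivG_anti (c : ℝ) :
    AntitoneOn (deriv (fun P => gfun C D s (Real.sqrt (s*(P+c))))) (Set.Ioi (-c)) := by
  intro a ha b hb hab
  rw [Set.mem_Ioi] at ha hb
  rw [(G_hasDerivAt hs c ha).deriv, (G_hasDerivAt hs c hb).deriv]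
  have ha' : 0 < s*(a+c) := mul_pos hs (by linarith)
  have hb' : 0 < s*(b+c) := mul_pos hs (by linarith)
  have hxa : 0 < Real.sqrt (s*(a+c)) := Real.sqrt_pos.2 ha'
  have hxb : 0 < Real.sqrt (s*(b+c)) := Real.sqrt_pos.2 hb'
  have hle : Real.sqrt (s*(a+c)) ≤ Real.sqrt (s*(b+c)) :=
    Real.sqrt_le_sqrt (by nlinarith)
  have := antitoneOn_phi hC hD hs hCs hxa hxb hle
  have hs2 : (0:ℝ) ≤ s/2 := by positivity
  exact mul_le_mul_of_nonneg_left this hs2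

include hC hD hs hCs in
lemma concaveOn_G (c : ℝ) :
    ConcaveOn ℝ (Set.Ioi (-c)) (fun P => gfun C D s (Real.sqrt (s*(P+c)))) := by
  apply AntitoneOn.concaveOn_of_deriv (convex_Ioi _)
  · intro P hP
    exact (G_hasDerivAt hs c hP).continuousAt.continuousWithinAt
  · intro P hP
    rw [interior_Ioi] at hP
    exact (G_hasDerivAt hs c hP).differentiableAt.differentiableWithinAt
  · rw [interior_Ioi]
    exact derivG_anti hC hD hs hCs c
end Signs
lemma erf_eq (y : ℝ) : erf y = 2 / Real.sqrt Real.pi * II y := rfl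

lemma ffun_eq {K z s P : ℝ} (hs : 0 < s) (hP : 0 < P) :
    ffun K z s P = gfun (K*z + (dlt K z)^2) (2*dlt K z/Real.sqrt s) s (Real.sqrt (s*P)) := by
  have hπ : (0:ℝ) < Real.sqrt Real.pi := Real.sqrt_pos.2 Real.pi_pos
  have hsP : 0 < s*P := mul_pos hs hP
  have hx : 0 < Real.sqrt (s*P) := Real.sqrt_pos.2 hsP
  have hsq : Real.sqrt (s*P) = Real.sqrt s * Real.sqrt P := Real.sqrt_mul hs.le P
  have hss : Real.sqrt s ^ 2 = s := Real.sq_sqrt hs.le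
  have hPP : Real.sqrt P ^ 2 = P := Real.sq_sqrt hP.le
  have hsn : (0:ℝ) < Real.sqrt s := Real.sqrt_pos.2 hs
  have hPn : (0:ℝ) < Real.sqrt P := Real.sqrt_pos.2 hP
  unfold ffun gfun
  rw [erf_eq, hsq]
  field_simp
  ring_nf
  linear_combination (-(II (Real.sqrt P*Real.sqrt s) * Real.sqrt P^2)) * hss
lemma exp_mul_le {b q : ℝ} (hb : 0 < b) (hq : 0 ≤ q) :
    q * Real.exp (-(b*q)) ≤ 1/(b*Real.exp 1) := by
  have h1 : (b*q)*Real.exp 1 ≤ Real.exp (b*q) := by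
    have h := Real.add_one_le_exp (b*q - 1)
    rw [Real.exp_sub] at h
    have h2 : b*q ≤ Real.exp (b*q) / Real.exp 1 := by linarith
    exact (le_div_iff₀ (Real.exp_pos 1)).1 h2
  rw [Real.exp_neg, ← div_eq_mul_inv, div_le_div_iff₀ (Real.exp_pos _) (by positivity)]
  nlinarith

lemma sqrt_exp_mul_le {b q : ℝ} (hb : 0 < b) (hq : 0 ≤ q) :
    Real.sqrt q * Real.exp (-(b*q)) ≤ Real.sqrt (1/(2*b*Real.exp 1)) := by
  have key : q * Real.exp (-(2*b*q)) ≤ 1/(2*b*Real.exp 1) := by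
    have := exp_mul_le (b := 2*b) (q := q) (by linarith) hq
    convert this using 3 <;> ring
  have h2 : Real.sqrt q * Real.exp (-(b*q)) = Real.sqrt (q * Real.exp (-(2*b*q))) := by
    rw [Real.sqrt_mul hq, ← Real.exp_half]
    congr 1
    ring
  rw [h2]
  exact Real.sqrt_le_sqrt key

lemma gfun_nonneg {C D s x : ℝ} (hC : 0 ≤ C) (hD : 0 ≤ D) (hs : 0 < s) (hx : 0 < x) :
    0 ≤ gfun C D s x := by
  unfold gfun
  have hI := II_nonneg hx.le
  positivity

lemma concaveOn_congr {t : Set ℝ} {f g : ℝ → ℝ} (hf : ConcaveOn ℝ t f)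
    (h : ∀ x ∈ t, f x = g x) : ConcaveOn ℝ t g := by
  refine ⟨hf.1, fun x hx y hy a b ha hb hab => ?_⟩
  rw [← h x hx, ← h y hy, ← h _ (hf.1 hx hy ha hb hab)]
  exact hf.2 hx hy ha hb hab

lemma c1_bound {K z κ δ q : ℝ} (hK : 0 < K) (hz : 0 < z) (hκ : 0 < κ) (hδnn : 0 ≤ δ)
    (hq : 0 < q) (a : ℝ) :
    20 * (K*z + (Real.sqrt q + δ)^2) * Real.exp (-a - (κ/9)*q)
      ≤ 20 * (K*z + δ^2 + Real.sqrt (18/(κ*Real.exp 1))*δ + 9/(κ*Real.exp 1)) *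
          Real.exp (-a) := by
  have hb : (0:ℝ) < κ/9 := by positivity
  rw [show -a - (κ/9)*q = -a + -((κ/9)*q) by ring, Real.exp_add]
  have h1 : q * Real.exp (-((κ/9)*q)) ≤ 9/(κ*Real.exp 1) := by
    have h := exp_mul_le hb hq.le
    have heq : 1/((κ/9)*Real.exp 1) = 9/(κ*Real.exp 1) := by
      field_simp
    rw [heq] at h
    exact h
  have h2 : Real.sqrt q * Real.exp (-((κ/9)*q)) ≤ Real.sqrt (18/(κ*Real.exp 1))/2 := by
    have hs1 := sqrt_exp_mul_le hb hq.le
    have heq : (1:ℝ)/(2*(κ/9)*Real.exp 1) = (18/(κ*Real.exp 1))/2^2 := by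
      field_simp; ring
    have heq2 : Real.sqrt ((18/(κ*Real.exp 1))/2^2) = Real.sqrt (18/(κ*Real.exp 1))/2 := by
      rw [Real.sqrt_div' _ (by norm_num : (0:ℝ) ≤ 2^2), Real.sqrt_sq (by norm_num : (0:ℝ) ≤ 2)]
    rw [heq, heq2] at hs1
    exact hs1
  have h3 : Real.exp (-((κ/9)*q)) ≤ 1 := by
    rw [Real.exp_le_one_iff]
    have : 0 ≤ (κ/9)*q := by positivity
    linarith
  have hsqq : Real.sqrt q ^ 2 = q := Real.sq_sqrt hq.le
  set E := Real.exp (-((κ/9)*q)) with hEdef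
  have hE0 : 0 < E := Real.exp_pos _
  have hKz0 : (0:ℝ) ≤ K*z + δ^2 := by positivity
  have p1 : (K*z + δ^2) * E ≤ K*z + δ^2 := mul_le_of_le_one_right hKz0 h3
  have p3 : (2*δ) * (Real.sqrt q * E) ≤ (2*δ) * (Real.sqrt (18/(κ*Real.exp 1))/2) :=
    mul_le_mul_of_nonneg_left h2 (by linarith)
  have expand : (K*z + (Real.sqrt q + δ)^2) * E
      = (K*z + δ^2)*E + q*E + (2*δ)*(Real.sqrt q * E) := by
    linear_combination E * hsqq
  have key : (K*z + (Real.sqrt q + δ)^2) * E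
      ≤ K*z + δ^2 + Real.sqrt (18/(κ*Real.exp 1))*δ + 9/(κ*Real.exp 1) := by
    rw [expand]
    have hp3' : (2*δ) * (Real.sqrt (18/(κ*Real.exp 1))/2) = Real.sqrt (18/(κ*Real.exp 1))*δ := by
      ring
    rw [hp3'] at p3
    linarith
  have hea : (0:ℝ) < Real.exp (-a) := Real.exp_pos _
  calc 20 * (K*z + (Real.sqrt q + δ)^2) * (Real.exp (-a) * E)
      = (20 * Real.exp (-a)) * ((K*z + (Real.sqrt q + δ)^2) * E) := by ring
    _ ≤ (20 * Real.exp (-a)) * (K*z + δ^2 + Real.sqrt (18/(κ*Real.exp 1))*δ + 9/(κ*Real.exp 1)) :=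
        mul_le_mul_of_nonneg_left key (by linarith)
    _ = 20 * (K*z + δ^2 + Real.sqrt (18/(κ*Real.exp 1))*δ + 9/(κ*Real.exp 1)) * Real.exp (-a) := by
        ring

set_option maxHeartbeats 4000000 in
theorem average_power_bound_low
    {Ω : Type*} [MeasureSpace Ω] [IsProbabilityMeasure (volume : Measure Ω)]
    (γ K z B W P : ℝ)
    (hγ : 0 < γ) (hK : 0 < K) (hz : 0 < z) (hB : 0 < B) (hW : 0 < W) (hP : 0 < P)
    (hWB : W ≤ B) (hlow : γ * (K / 2) * z ^ 2 ≤ 1)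
    (κ δ Po c₁ : ℝ)
    (hκ : κ = 2 * γ ^ 2 * K * z ^ 3 / 3)
    (hδ : δ = Real.sqrt (3 * K * z / (4 * Real.exp 1)))
    (hPo : Po = 3 * (K * z + δ ^ 2))
    (hc₁ : c₁ = 20 * (K * z + δ ^ 2 + Real.sqrt (18 / (κ * Real.exp 1)) * δ +
      9 / (κ * Real.exp 1)) * Real.exp (-Real.sqrt (γ * K * z ^ 2)))
    (R₁ : ℝ → ℝ)
    (hR₁ : ∀ q, 0 < q → R₁ q =
      4 * (K * z + (Real.sqrt q + δ) ^ 2) *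
        ((2 * (W / B) / Real.sqrt ((κ / 8) * q)) * (Real.sqrt Real.pi / 2) *
            erf (Real.sqrt ((κ / 8) * q)) +
          5 * Real.exp (-Real.sqrt (γ * K * z ^ 2) - (κ / 9) * q)))
    (Prand : Ω → ℝ) (hPrand_pos : ∀ᵐ ω : Ω, 0 < Prand ω) (hPrand_int : Integrable Prand)
    (hPrand_mean : ∫ ω, Prand ω ≤ P) :
    (∀ q, 0 < q → R₁ q ≤ c₁ + 8 * (W / B) * ffun K z (κ / 8) (q + Po)) ∧
    (MonotoneOn (fun P' => c₁ + 8 * (W / B) * ffun K z (κ / 8) (P' + Po)) (Set.Ioi (0:ℝ)) ∧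
      ConcaveOn ℝ (Set.Ioi (0:ℝ)) (fun P' => c₁ + 8 * (W / B) * ffun K z (κ / 8) (P' + Po))) ∧
    (∫ ω, R₁ (Prand ω)) ≤ c₁ + 8 * (W / B) * ffun K z (κ / 8) (P + Po) := by
  have hδ' : δ = dlt K z := hδ
  have hδnn : 0 ≤ δ := hδ ▸ Real.sqrt_nonneg _
  have hδsq : δ^2 = 3*K*z/(4*Real.exp 1) := by
    rw [hδ]; exact Real.sq_sqrt (by positivity)
  have he2 : (2:ℝ) ≤ Real.exp 1 := by
    have := Real.add_one_le_exp 1; linarith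
  have hκpos : 0 < κ := by
    rw [hκ]
    have := mul_pos (mul_pos (mul_pos (by norm_num : (0:ℝ) < 2) (pow_pos hγ 2)) hK)
      (pow_pos hz 3)
    linarith
  set s : ℝ := κ / 8 with hsdef
  have hspos : 0 < s := by positivity
  set C : ℝ := K*z + (dlt K z)^2 with hCdef
  set D : ℝ := 2*dlt K z/Real.sqrt s with hDdef
  have hKz : 0 < K*z := mul_pos hK hz
  have hC0 : 0 ≤ C := by rw [hCdef]; positivity
  have hD0 : 0 ≤ D := by rw [hDdef, ← hδ']; positivity
  have hδ2le : δ^2 ≤ K*z/2 := by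
    rw [hδsq, div_le_div_iff₀ (by positivity) (by norm_num)]
    nlinarith
  have hγKz : γ*K*z^2 ≤ 2 := by nlinarith
  have hCs : 2*C*s ≤ 1 := by
    rw [hCdef, ← hδ', hsdef, hκ]
    have h1 : 0 ≤ γ*K*z^2 := by positivity
    have hA : K*z + δ^2 ≤ 3*(K*z)/2 := by linarith
    have hB2 : (γ*K*z^2)^2 ≤ 4 := by nlinarith
    have hpos : (0:ℝ) ≤ γ^2*K*z^3 := by positivity
    have hm := mul_le_mul_of_nonneg_right hA hpos
    linarith [hm, hB2]
  have hPopos : 0 < Po := by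
    rw [hPo]; nlinarith [sq_nonneg δ]
  -- Part (i)
  have part1 : ∀ q, 0 < q → R₁ q ≤ c₁ + 8 * (W / B) * ffun K z s (q + Po) := by
    intro q hq
    rw [hR₁ q hq]
    have hffq : ffun K z s q = gfun C D s (Real.sqrt (s*q)) := ffun_eq hspos hq
    have hffqPo : ffun K z s (q+Po) = gfun C D s (Real.sqrt (s*(q+Po))) :=
      ffun_eq hspos (by linarith)
    have hmono := monotoneOn_G hC0 hD0 hspos hCs 0 (a := q) (b := q + Po)
      (by simp; linarith) (by simp; linarith) (by linarith)
    simp only [add_zero] at hmono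
    have hmf : ffun K z s q ≤ ffun K z s (q+Po) := by rw [hffq, hffqPo]; exact hmono
    have hWB0 : 0 ≤ W/B := by positivity
    have e1 : 4 * (K * z + (Real.sqrt q + δ) ^ 2) *
        ((2 * (W / B) / Real.sqrt (s * q)) * (Real.sqrt Real.pi / 2) *
            erf (Real.sqrt (s * q)) +
          5 * Real.exp (-Real.sqrt (γ * K * z ^ 2) - (κ / 9) * q))
        = 8*(W/B) * ffun K z s q
          + 20 * (K * z + (Real.sqrt q + δ) ^ 2) *
              Real.exp (-Real.sqrt (γ * K * z ^ 2) - (κ / 9) * q) := by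
      rw [hδ']; unfold ffun; ring
    rw [e1]
    have hexp_bound : 20 * (K * z + (Real.sqrt q + δ) ^ 2) *
        Real.exp (-Real.sqrt (γ * K * z ^ 2) - (κ / 9) * q) ≤ c₁ := by
      rw [hc₁]
      exact c1_bound hK hz hκpos hδnn hq _
    have hff_bound : 8*(W/B) * ffun K z s q ≤ 8*(W/B) * ffun K z s (q+Po) := by
      apply mul_le_mul_of_nonneg_left hmf (by positivity)
    linarith
  -- setup for parts (ii) and (iii)
  set Φ : ℝ → ℝ := fun P' => c₁ + 8 * (W / B) * ffun K z s (P' + Po) with hΦdef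
  set Ψ : ℝ → ℝ := fun P' => c₁ + 8 * (W / B) * gfun C D s (Real.sqrt (s*(P'+Po))) with hΨdef
  have hsub0 : Set.Ioi (0:ℝ) ⊆ Set.Ioi (-Po) := Set.Ioi_subset_Ioi (by linarith)
  have hsubI : Set.Ici (0:ℝ) ⊆ Set.Ioi (-Po) := fun x hx =>
    lt_of_lt_of_le (by linarith : -Po < (0:ℝ)) hx
  have hEq : ∀ P' ∈ Set.Ioi (-Po), Φ P' = Ψ P' := by
    intro P' hP'
    rw [Set.mem_Ioi] at hP'
    rw [hΦdef, hΨdef]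
    simp only
    rw [ffun_eq hspos (by linarith : (0:ℝ) < P'+Po)]
  have h8 : (0:ℝ) ≤ 8*(W/B) := by positivity
  have hGmono := monotoneOn_G hC0 hD0 hspos hCs Po
  have hΨmono : MonotoneOn Ψ (Set.Ioi (-Po)) := by
    intro a ha b hb hab
    have hm := hGmono ha hb hab
    rw [hΨdef]
    simp only
    have := mul_le_mul_of_nonneg_left hm h8
    linarith
  have hGconc := concaveOn_G hC0 hD0 hspos hCs Po
  have hΨconc : ConcaveOn ℝ (Set.Ioi (-Po)) Ψ := by
    have hconst : ConcaveOn ℝ (Set.Ioi (-Po)) (fun _ : ℝ => c₁) :=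
      concaveOn_const _ (convex_Ioi _)
    have hsm := hGconc.smul h8
    refine concaveOn_congr (hconst.add hsm) ?_
    intro x hx
    simp [hΨdef, Pi.add_apply, Pi.smul_apply, smul_eq_mul]
  have hΨcont : ContinuousOn Ψ (Set.Ioi (-Po)) := by
    intro P' hP'
    rw [Set.mem_Ioi] at hP'
    have hd := G_hasDerivAt (C := C) (D := D) hspos Po hP'
    exact (continuousAt_const.add
      (continuousAt_const.mul hd.continuousAt)).continuousWithinAt
  have hΦmonoI : MonotoneOn Φ (Set.Ici 0) := by
    intro a ha b hb hab
    rw [hEq a (hsubI ha), hEq b (hsubI hb)]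
    exact hΨmono (hsubI ha) (hsubI hb) hab
  have hΦconcI : ConcaveOn ℝ (Set.Ici 0) Φ :=
    concaveOn_congr (hΨconc.subset hsubI (convex_Ici 0))
      (fun x hx => (hEq x (hsubI hx)).symm)
  have hΦcontI : ContinuousOn Φ (Set.Ici 0) :=
    ((hΨcont.mono hsubI).congr (fun x hx => hEq x (hsubI hx)))
  refine ⟨part1, ⟨?_, ?_⟩, ?_⟩
  · -- monotone on Ioi 0
    intro a ha b hb hab
    rw [hEq a (hsub0 ha), hEq b (hsub0 hb)]
    exact hΨmono (hsub0 ha) (hsub0 hb) hab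
  · -- concave on Ioi 0
    exact concaveOn_congr (hΨconc.subset hsub0 (convex_Ioi 0))
      (fun x hx => (hEq x (hsub0 hx)).symm)
  -- Part (iii)
  have hIIcont : Continuous II := by
    apply continuous_iff_continuousAt.2
    intro x
    exact (II_deriv x).continuousAt
  have herf : Continuous erf := by
    have : erf = fun y => 2 / Real.sqrt Real.pi * II y := rfl
    rw [this]
    exact continuous_const.mul hIIcont
  have hdenPo : Continuous fun P' : ℝ => Real.sqrt (s*(P'+Po)) :=
    Real.continuous_sqrt.comp (continuous_const.mul (continuous_id.add continuous_const))
  have hden : Continuous fun q : ℝ => Real.sqrt (s*q) :=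
    Real.continuous_sqrt.comp (continuous_const.mul continuous_id)
  have hΦmeas : Measurable Φ := by
    rw [hΦdef]
    apply Measurable.add measurable_const
    apply Measurable.const_mul
    unfold ffun
    apply Measurable.div _ hdenPo.measurable
    have hA : Continuous fun P' : ℝ => K*z + (Real.sqrt (P'+Po) + dlt K z)^2 :=
      continuous_const.add (((Real.continuous_sqrt.comp
        (continuous_id.add continuous_const)).add continuous_const).pow 2)
    exact ((hA.mul continuous_const).mul (herf.comp hdenPo)).measurable
  set F : ℝ → ℝ := fun q =>
      4 * (K * z + (Real.sqrt q + δ) ^ 2) *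
        ((2 * (W / B) / Real.sqrt (s * q)) * (Real.sqrt Real.pi / 2) *
            erf (Real.sqrt (s * q)) +
          5 * Real.exp (-Real.sqrt (γ * K * z ^ 2) - (κ / 9) * q)) with hFdef
  have hFmeas : Measurable F := by
    rw [hFdef]
    have hA2 : Continuous fun q : ℝ => 4*(K*z + (Real.sqrt q + δ)^2) :=
      continuous_const.mul (continuous_const.add
        ((Real.continuous_sqrt.add continuous_const).pow 2))
    have hT1 : Measurable fun q : ℝ =>
        (2*(W/B)/Real.sqrt (s*q)) * (Real.sqrt Real.pi/2) * erf (Real.sqrt (s*q)) :=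
      ((measurable_const.div hden.measurable).mul measurable_const).mul
        (herf.comp hden).measurable
    have hT2 : Continuous fun q : ℝ =>
        5*Real.exp (-Real.sqrt (γ*K*z^2) - (κ/9)*q) :=
      continuous_const.mul (Real.continuous_exp.comp
        (continuous_const.sub (continuous_const.mul continuous_id)))
    exact hA2.measurable.mul (hT1.add hT2.measurable)
  have hffnn : ∀ q : ℝ, 0 < q → 0 ≤ ffun K z s q := by
    intro q hq
    rw [ffun_eq hspos hq]
    exact gfun_nonneg hC0 hD0 hspos (Real.sqrt_pos.2 (mul_pos hspos hq))
  have hc₁nn : 0 ≤ c₁ := by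
    rw [hc₁]
    have h9 : (0:ℝ) ≤ 9/(κ*Real.exp 1) :=
      div_nonneg (by norm_num) (mul_nonneg hκpos.le (Real.exp_pos 1).le)
    have h18 : (0:ℝ) ≤ Real.sqrt (18/(κ*Real.exp 1)) * δ :=
      mul_nonneg (Real.sqrt_nonneg _) hδnn
    exact mul_nonneg (mul_nonneg (by norm_num)
      (by linarith [sq_nonneg δ, hKz])) (Real.exp_pos _).le
  have hΦnn : ∀ q : ℝ, 0 ≤ q → 0 ≤ Φ q := by
    intro q hq
    rw [hΦdef]
    simp only
    have := hffnn (q+Po) (by linarith)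
    nlinarith [mul_nonneg h8 this]
  have hMnn : 0 ≤ Φ 1 - Φ 0 :=
    sub_nonneg.2 (hΦmonoI (Set.mem_Ici.2 le_rfl) (Set.mem_Ici.2 zero_le_one) zero_le_one)
  have hlin : ∀ q : ℝ, 0 ≤ q → Φ q ≤ Φ 1 + (Φ 1 - Φ 0)*q := by
    intro q hq0
    rcases le_total q 1 with h|h
    · have hle := hΦmonoI (Set.mem_Ici.2 hq0) (Set.mem_Ici.2 zero_le_one) h
      nlinarith [mul_nonneg hMnn hq0]
    · have hq1 : (0:ℝ) < q := lt_of_lt_of_le one_pos h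
      have ha1 : (0:ℝ) ≤ 1 - 1/q := by
        rw [sub_nonneg, div_le_one hq1]
        exact h
      have hb1 : (0:ℝ) ≤ 1/q := by positivity
      have hab1 : (1 - 1/q) + 1/q = 1 := by ring
      have hcc := hΦconcI.2 (Set.mem_Ici.2 le_rfl) (Set.mem_Ici.2 hq0) ha1 hb1 hab1
      simp only [smul_eq_mul] at hcc
      have harg : (1-1/q)*(0:ℝ) + (1/q)*q = 1 := by field_simp; ring
      rw [harg] at hcc
      have hmul := mul_le_mul_of_nonneg_left hcc hq1.le
      have hid : q*((1-1/q)*Φ 0 + (1/q)*Φ q) = (q-1)*Φ 0 + Φ q := by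
        field_simp
      rw [hid] at hmul
      nlinarith [hMnn]
  have hPr_ae_mem : ∀ᵐ ω : Ω, Prand ω ∈ Set.Ici (0:ℝ) :=
    hPrand_pos.mono (fun ω h => le_of_lt h)
  have hΦPr_meas : AEStronglyMeasurable (fun ω => Φ (Prand ω)) volume :=
    (hΦmeas.comp_aemeasurable hPrand_int.aemeasurable).aestronglyMeasurable
  have hbound_int : Integrable (fun ω => Φ 1 + (Φ 1 - Φ 0) * Prand ω) :=
    (integrable_const _).add (hPrand_int.const_mul _)
  have hIntΦ : Integrable (fun ω => Φ (Prand ω)) := by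
    apply hbound_int.mono' hΦPr_meas
    filter_upwards [hPrand_pos] with ω hω
    rw [Real.norm_eq_abs, abs_of_nonneg (hΦnn _ hω.le)]
    exact hlin _ hω.le
  have hR₁nn : ∀ q : ℝ, 0 < q → 0 ≤ R₁ q := by
    intro q hq
    rw [hR₁ q hq]
    have herfnn : 0 ≤ erf (Real.sqrt (s*q)) := by
      rw [erf_eq]
      exact mul_nonneg (by positivity) (II_nonneg (Real.sqrt_nonneg _))
    have hWBnn : (0:ℝ) ≤ W/B := by positivity
    have hT1 : (0:ℝ) ≤ (2*(W/B)/Real.sqrt (s*q)) * (Real.sqrt Real.pi/2) *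
        erf (Real.sqrt (s*q)) :=
      mul_nonneg (mul_nonneg (div_nonneg (by linarith) (Real.sqrt_nonneg _))
        (by positivity)) herfnn
    have hT2 : (0:ℝ) ≤ 5*Real.exp (-Real.sqrt (γ*K*z^2) - (κ/9)*q) := by positivity
    have hA : (0:ℝ) ≤ 4*(K*z + (Real.sqrt q + δ)^2) := by nlinarith [sq_nonneg (Real.sqrt q + δ)]
    exact mul_nonneg hA (by linarith)
  have hR₁smeas : AEStronglyMeasurable (fun ω => R₁ (Prand ω)) volume := by
    have haeeq : (fun ω => F (Prand ω)) =ᵐ[volume] (fun ω => R₁ (Prand ω)) :=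
      hPrand_pos.mono (fun ω hω => (hR₁ _ hω).symm)
    exact ((hFmeas.comp_aemeasurable hPrand_int.aemeasurable).aestronglyMeasurable).congr haeeq
  have hIntR : Integrable (fun ω => R₁ (Prand ω)) := by
    apply hbound_int.mono' hR₁smeas
    filter_upwards [hPrand_pos] with ω hω
    rw [Real.norm_eq_abs, abs_of_nonneg (hR₁nn _ hω)]
    exact le_trans (part1 _ hω) (hlin _ hω.le)
  have hle_int : (∫ ω, R₁ (Prand ω)) ≤ ∫ ω, Φ (Prand ω) := by
    apply integral_mono_ae hIntR hIntΦ
    filter_upwards [hPrand_pos] with ω hω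
    exact part1 _ hω
  have hJensen : (∫ ω, Φ (Prand ω)) ≤ Φ (∫ ω, Prand ω) :=
    hΦconcI.le_map_integral hΦcontI isClosed_Ici hPr_ae_mem hPrand_int hIntΦ
  have hmean_nn : 0 ≤ ∫ ω, Prand ω :=
    integral_nonneg_of_ae (hPrand_pos.mono (fun ω h => le_of_lt h))
  have hfinal : Φ (∫ ω, Prand ω) ≤ Φ P :=
    hΦmonoI (Set.mem_Ici.2 hmean_nn) (Set.mem_Ici.2 hP.le) hPrand_mean
  calc (∫ ω, R₁ (Prand ω)) ≤ ∫ ω, Φ (Prand ω) := hle_int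
    _ ≤ Φ (∫ ω, Prand ω) := hJensen
    _ ≤ Φ P := hfinal
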